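/- Let d, k be positive integers, δ ≥ 0, and let y₁, …, y_k ∈ ℝ^d. Set M := Σ_{i=1}^k y_i y_iᵀ (a symmetric positive semidefinite d × d matrix of rank at most k). Let A be a real symmetric d × d matrix with operator norm ‖A − M‖_op ≤ δ, and let U ⊆ ℝ^d be the span of an orthonormal set of eigenvectors of A corresponding to its min(k, d) largest eigenvalues (counted with multiplicity). Then for every i ∈ {1, …, k}, the Euclidean distance from y_i to the subspace U satisfies dist(y_i, U) ≤ √(2δ). -/

import Mathlib

open Matrix
local notation "⟪" x ", " y "⟫_ℝ" => @inner ℝ _ _ x y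

set_option maxHeartbeats 1000000 in
/-- If `M = ∑ i, y_i y_iᵀ` and `A` is a real symmetric matrix with `‖A - M‖_op ≤ δ`,
and `U` is the span of orthonormal eigenvectors of `A` corresponding to its
`min k d` largest eigenvalues (the eigenvalues being listed in nonincreasing order,
counted with multiplicity, by an orthonormal eigenbasis), then every `y_i` is within
distance `√(2δ)` of `U`. -/
theorem dist_to_top_eigenspace_le
    (d k : ℕ) (hd : 1 ≤ d) (hk : 1 ≤ k) (δ : ℝ) (hδ : 0 ≤ δ)
    (y : Fin k → EuclideanSpace ℝ (Fin d))
    (M A : Matrix (Fin d) (Fin d) ℝ)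
    (hM : M = ∑ i, Matrix.of fun a b => y i a * y i b)
    (hA : A.IsHermitian)
    (hop : ‖Matrix.toEuclideanCLM (𝕜 := ℝ) (A - M)‖ ≤ δ)
    (v : Fin d → EuclideanSpace ℝ (Fin d)) (lam : Fin d → ℝ)
    (hortho : Orthonormal ℝ v)
    (heig : ∀ j, Matrix.toEuclideanLin A (v j) = lam j • v j)
    (hmono : Antitone lam)
    (U : Submodule ℝ (EuclideanSpace ℝ (Fin d)))
    (hU : U = Submodule.span ℝ (v '' {j : Fin d | (j : ℕ) < min k d})) :
    ∀ i, Metric.infDist (y i) (U : Set (EuclideanSpace ℝ (Fin d)))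
      ≤ Real.sqrt (2 * δ) := by
  intro i
  classical
  haveI : Nonempty (Fin d) := ⟨⟨0, hd⟩⟩
  -- orthonormal basis
  have hcard : Fintype.card (Fin d) = Module.finrank ℝ (EuclideanSpace ℝ (Fin d)) := by
    simp
  let b : OrthonormalBasis (Fin d) ℝ (EuclideanSpace ℝ (Fin d)) :=
    (basisOfOrthonormalOfCardEqFinrank hortho hcard).toOrthonormalBasis
      (by rwa [coe_basisOfOrthonormalOfCardEqFinrank])
  have hb : ⇑b = v := by
    simp [b, Module.Basis.coe_toOrthonormalBasis, coe_basisOfOrthonormalOfCardEqFinrank]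
  have hexp : ∀ x : EuclideanSpace ℝ (Fin d), ∑ j, ⟪v j, x⟫_ℝ • v j = x := by
    intro x; rw [← hb]; exact b.sum_repr' x
  have hns : ∀ x : EuclideanSpace ℝ (Fin d), ‖x‖ ^ 2 = ∑ j, ⟪v j, x⟫_ℝ ^ 2 := by
    intro x
    have h1 : ⟪(∑ j, ⟪v j, x⟫_ℝ • v j : EuclideanSpace ℝ (Fin d)), x⟫_ℝ = ‖x‖ ^ 2 := by
      rw [hexp x, real_inner_self_eq_norm_sq]
    rw [← h1, sum_inner]
    refine Finset.sum_congr rfl fun j _ => ?_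
    rw [real_inner_smul_left]; ring
  -- rank one action
  have hMone : ∀ (i' : Fin k) (x : EuclideanSpace ℝ (Fin d)),
      Matrix.toEuclideanLin (Matrix.of fun a b => y i' a * y i' b) x
        = ⟪y i', x⟫_ℝ • y i' := by
    intro i' x
    ext a
    rw [Matrix.toEuclideanLin_apply]
    simp only [PiLp.toLp_apply, Matrix.mulVec,
      dotProduct, Matrix.of_apply, PiLp.smul_apply, smul_eq_mul,
      PiLp.inner_apply, RCLike.inner_apply, conj_trivial]
    rw [Finset.sum_mul]
    exact Finset.sum_congr rfl fun c _ => by ring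
  have hMquad : ∀ x : EuclideanSpace ℝ (Fin d),
      ⟪Matrix.toEuclideanLin M x, x⟫_ℝ = ∑ i', ⟪y i', x⟫_ℝ ^ 2 := by
    intro x
    rw [hM, map_sum, LinearMap.sum_apply, sum_inner]
    refine Finset.sum_congr rfl fun i' _ => ?_
    rw [hMone, real_inner_smul_left]; ring
  have hAquad : ∀ x : EuclideanSpace ℝ (Fin d),
      ⟪Matrix.toEuclideanLin A x, x⟫_ℝ = ∑ j, lam j * ⟪v j, x⟫_ℝ ^ 2 := by
    intro x
    have hx : Matrix.toEuclideanLin A x = ∑ j, (lam j * ⟪v j, x⟫_ℝ) • v j := by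
      conv_lhs => rw [← hexp x]
      rw [map_sum]
      refine Finset.sum_congr rfl fun j _ => ?_
      rw [_root_.map_smul, heig, smul_smul, mul_comm]
    rw [hx, sum_inner]
    refine Finset.sum_congr rfl fun j _ => ?_
    rw [real_inner_smul_left]; ring
  -- perturbation bound
  have hpert : ∀ x : EuclideanSpace ℝ (Fin d),
      |⟪Matrix.toEuclideanLin (A - M) x, x⟫_ℝ| ≤ δ * ‖x‖ ^ 2 := by
    intro x
    have h4 : (Matrix.toEuclideanCLM (𝕜 := ℝ) (A - M)) x
        = Matrix.toEuclideanLin (A - M) x :=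
      LinearMap.congr_fun (Matrix.coe_toEuclideanCLM_eq_toEuclideanLin (A - M)) x
    have h3 := (Matrix.toEuclideanCLM (𝕜 := ℝ) (A - M)).le_opNorm x
    rw [h4] at h3
    have h2 : ‖Matrix.toEuclideanLin (A - M) x‖ ≤ δ * ‖x‖ :=
      h3.trans (mul_le_mul_of_nonneg_right hop (norm_nonneg x))
    calc |⟪Matrix.toEuclideanLin (A - M) x, x⟫_ℝ|
        ≤ ‖Matrix.toEuclideanLin (A - M) x‖ * ‖x‖ := abs_real_inner_le_norm _ _
      _ ≤ (δ * ‖x‖) * ‖x‖ := mul_le_mul_of_nonneg_right h2 (norm_nonneg x)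
      _ = δ * ‖x‖ ^ 2 := by ring
  have hdecomp : ∀ x : EuclideanSpace ℝ (Fin d),
      ⟪Matrix.toEuclideanLin A x, x⟫_ℝ
        = ⟪Matrix.toEuclideanLin (A - M) x, x⟫_ℝ + ⟪Matrix.toEuclideanLin M x, x⟫_ℝ := by
    intro x
    rw [map_sub, LinearMap.sub_apply, inner_sub_left]
    ring
  -- small eigenvalues
  have hlam : ∀ j : Fin d, k ≤ (j : ℕ) → lam j ≤ δ := by
    intro j hj
    have hkd : k < d := lt_of_le_of_lt hj j.isLt
    set jk : Fin d := ⟨k, hkd⟩ with hjk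
    have hjj : lam j ≤ lam jk := hmono (by simpa [Fin.le_def, hjk] using hj)
    suffices h : lam jk ≤ δ by linarith
    let ι : Fin (k + 1) → Fin d := Fin.castLE hkd
    have hι : Function.Injective ι := Fin.castLE_injective hkd
    have hu : Orthonormal ℝ (v ∘ ι) := hortho.comp ι hι
    set V : Submodule ℝ (EuclideanSpace ℝ (Fin d)) :=
      Submodule.span ℝ (Set.range (v ∘ ι)) with hV
    have hdim : Module.finrank ℝ V = k + 1 := by
      simpa using finrank_span_eq_card hu.linearIndependent
    let f : V →ₗ[ℝ] (Fin k → ℝ) :=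
      LinearMap.pi fun i' => ((innerSL ℝ (y i')).toLinearMap).comp V.subtype
    have hker : LinearMap.ker f ≠ ⊥ := by
      intro hbot
      have hinj : Function.Injective f := LinearMap.ker_eq_bot.mp hbot
      have hle := LinearMap.finrank_le_finrank_of_injective hinj
      rw [hdim, Module.finrank_fintype_fun_eq_card, Fintype.card_fin] at hle
      omega
    obtain ⟨x, hxker, hx0⟩ := Submodule.exists_mem_ne_zero_of_ne_bot hker
    set z : EuclideanSpace ℝ (Fin d) := (x : EuclideanSpace ℝ (Fin d)) with hzdef
    have hz0 : z ≠ 0 := fun h => hx0 (Subtype.ext h)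
    have hzV : z ∈ V := x.2
    have hzy : ∀ i', ⟪y i', z⟫_ℝ = 0 := by
      intro i'
      have hfx := LinearMap.mem_ker.mp hxker
      have := congrFun hfx i'
      simpa [f, LinearMap.pi_apply] using this
    have hcoef : ∀ j' : Fin d, k < (j' : ℕ) → ⟪v j', z⟫_ℝ = 0 := by
      intro j' hj'
      have hle : V ≤ LinearMap.ker ((innerSL ℝ (v j')).toLinearMap) := by
        rw [hV, Submodule.span_le]
        rintro _ ⟨t, rfl⟩
        simp only [SetLike.mem_coe, LinearMap.mem_ker, ContinuousLinearMap.coe_coe,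
          innerSL_apply_apply, Function.comp_apply]
        refine hortho.2 ?_
        intro hcontra
        have : (j' : ℕ) = ((ι t : Fin d) : ℕ) := congrArg Fin.val hcontra
        have ht : ((ι t : Fin d) : ℕ) ≤ k := by
          simp only [ι, Fin.coe_castLE]
          exact Nat.lt_succ_iff.mp t.isLt
        omega
      have := hle hzV
      simpa using this
    have hMz0 : ⟪Matrix.toEuclideanLin M z, z⟫_ℝ = 0 := by
      rw [hMquad z]
      exact Finset.sum_eq_zero fun i' _ => by rw [hzy]; ring
    have hlow : lam jk * ‖z‖ ^ 2 ≤ ⟪Matrix.toEuclideanLin A z, z⟫_ℝ := by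
      rw [hAquad z, hns z, Finset.mul_sum]
      refine Finset.sum_le_sum fun j' _ => ?_
      by_cases hc : ⟪v j', z⟫_ℝ = 0
      · rw [hc]; simp
      · have hj'k : (j' : ℕ) ≤ k := by
          by_contra hcon
          exact hc (hcoef j' (by omega))
        have hm : lam jk ≤ lam j' := hmono (by simpa [Fin.le_def, hjk] using hj'k)
        nlinarith [sq_nonneg (⟪v j', z⟫_ℝ)]
    have hup : ⟪Matrix.toEuclideanLin A z, z⟫_ℝ ≤ δ * ‖z‖ ^ 2 := by
      rw [hdecomp z, hMz0]
      have := (abs_le.mp (hpert z)).2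
      linarith
    have hznorm : 0 < ‖z‖ ^ 2 := by
      have : 0 < ‖z‖ := norm_pos_iff.mpr hz0
      positivity
    exact le_of_mul_le_mul_right (by linarith) hznorm
  -- main argument
  set u0 : EuclideanSpace ℝ (Fin d) := (U.orthogonalProjectionOnto (y i) : EuclideanSpace ℝ (Fin d))
    with hu0def
  have hu0U : u0 ∈ U := (U.orthogonalProjectionOnto (y i)).2
  set w : EuclideanSpace ℝ (Fin d) := y i - u0 with hwdef
  have hwperp : w ∈ Uᗮ := Submodule.sub_starProjection_mem_orthogonal (y i)
  have hwv : ∀ j : Fin d, (j : ℕ) < min k d → ⟪v j, w⟫_ℝ = 0 := by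
    intro j hj
    have hvU : v j ∈ U := by
      rw [hU]; exact Submodule.subset_span ⟨j, hj, rfl⟩
    exact (Submodule.mem_orthogonal U w).mp hwperp (v j) hvU
  have hyw : ⟪y i, w⟫_ℝ = ‖w‖ ^ 2 := by
    have hsplit : y i = u0 + w := by rw [hwdef]; abel
    rw [hsplit, inner_add_left, (Submodule.mem_orthogonal U w).mp hwperp u0 hu0U,
      real_inner_self_eq_norm_sq]
    ring
  have hMw : (‖w‖ ^ 2) ^ 2 ≤ ⟪Matrix.toEuclideanLin M w, w⟫_ℝ := by
    rw [hMquad w]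
    calc (‖w‖ ^ 2) ^ 2 = ⟪y i, w⟫_ℝ ^ 2 := by rw [hyw]
      _ ≤ ∑ i', ⟪y i', w⟫_ℝ ^ 2 :=
          Finset.single_le_sum (f := fun i' => ⟪y i', w⟫_ℝ ^ 2)
            (fun i' _ => sq_nonneg _) (Finset.mem_univ i)
  have hAw : ⟪Matrix.toEuclideanLin A w, w⟫_ℝ ≤ δ * ‖w‖ ^ 2 := by
    rw [hAquad w, hns w, Finset.mul_sum]
    refine Finset.sum_le_sum fun j _ => ?_
    by_cases hc : (j : ℕ) < min k d
    · rw [hwv j hc]; simp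
    · have hkj : k ≤ (j : ℕ) := by
        have := j.isLt; omega
      have := hlam j hkj
      nlinarith [sq_nonneg (⟪v j, w⟫_ℝ)]
  have hpw := (abs_le.mp (hpert w)).1
  have hdec := hdecomp w
  have hw2 : (‖w‖ ^ 2) ^ 2 ≤ 2 * δ * ‖w‖ ^ 2 := by nlinarith
  have hwle : ‖w‖ ≤ Real.sqrt (2 * δ) := by
    rcases eq_or_lt_of_le (norm_nonneg w) with h0 | hpos
    · rw [← h0]; exact Real.sqrt_nonneg _
    · have hle2 : ‖w‖ ^ 2 ≤ 2 * δ := by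
        have hp : 0 < ‖w‖ ^ 2 := by positivity
        exact le_of_mul_le_mul_right (by nlinarith) hp
      calc ‖w‖ = Real.sqrt (‖w‖ ^ 2) := (Real.sqrt_sq (norm_nonneg w)).symm
        _ ≤ Real.sqrt (2 * δ) := Real.sqrt_le_sqrt hle2
  calc Metric.infDist (y i) (U : Set (EuclideanSpace ℝ (Fin d)))
      ≤ dist (y i) u0 := Metric.infDist_le_dist_of_mem hu0U
    _ = ‖w‖ := by rw [dist_eq_norm, hwdef]
    _ ≤ Real.sqrt (2 * δ) := hwle
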